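/- Fix a positive integer k and finite sets A, B ⊂ ℕ (nonempty). Let m > k · max(A) and C = A + m·B (where m·B = {m·b : b ∈ B}). Then for all nonnegative integers s, d with s + d ≤ k and s + d ≥ 1, |sC - dC| = |sA - dA| · |sB - dB|. -/
import Mathlib

open Finset Pointwise

/-- `itSum k A` is the k-fold sumset A + A + ⋯ + A (with `itSum 0 A = {0}`). -/
def itSum : ℕ → Finset ℤ → Finset ℤ
  | 0, _ => {0}
  | n+1, A => A + itSum n A

/-- `gDiff s d A = sA - dA`. -/
def gDiff (s d : ℕ) (A : Finset ℤ) : Finset ℤ := itSum s A - itSum d A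

lemma image_mul_add (m : ℤ) (X Y : Finset ℤ) :
    (X + Y).image (fun x => m * x) = X.image (fun x => m * x) + Y.image (fun x => m * x) := by
  ext z
  simp only [Finset.mem_image, Finset.mem_add]
  constructor
  · rintro ⟨w, ⟨x, hx, y, hy, rfl⟩, rfl⟩
    exact ⟨m*x, ⟨x, hx, rfl⟩, m*y, ⟨y, hy, rfl⟩, (mul_add m x y).symm⟩
  · rintro ⟨_, ⟨x, hx, rfl⟩, _, ⟨y, hy, rfl⟩, rfl⟩
    exact ⟨x + y, ⟨x, hx, y, hy, rfl⟩, mul_add m x y⟩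

lemma itSum_add (n : ℕ) (X Y : Finset ℤ) : itSum n (X + Y) = itSum n X + itSum n Y := by
  induction n with
  | zero => simp [itSum]
  | succ n ih =>
    simp only [itSum, ih]
    abel

lemma itSum_image (m : ℤ) (n : ℕ) (Y : Finset ℤ) :
    itSum n (Y.image (fun b => m * b)) = (itSum n Y).image (fun b => m * b) := by
  induction n with
  | zero => simp [itSum]
  | succ n ih => simp only [itSum, ih, image_mul_add]

lemma itSum_C (m : ℤ) (n : ℕ) (A B : Finset ℤ) :
    itSum n (A + B.image (fun b => m * b)) = itSum n A + (itSum n B).image (fun b => m * b) := by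
  rw [itSum_add, itSum_image]

lemma gDiff_split (m : ℤ) (s d : ℕ) (A B C : Finset ℤ)
    (hC : C = A + B.image (fun b => m * b)) :
    gDiff s d C = gDiff s d A + (gDiff s d B).image (fun b => m * b) := by
  subst hC
  unfold gDiff
  rw [itSum_C, itSum_C]
  ext z
  simp only [Finset.mem_sub, Finset.mem_add, Finset.mem_image]
  constructor
  · rintro ⟨u, ⟨p, hp, _, ⟨q, hq, rfl⟩, rfl⟩, v, ⟨p', hp', _, ⟨q', hq', rfl⟩, rfl⟩, rfl⟩
    exact ⟨p - p', ⟨p, hp, p', hp', rfl⟩, m * (q - q'), ⟨q - q', ⟨q, hq, q', hq', rfl⟩, rfl⟩,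
      by ring⟩
  · rintro ⟨_, ⟨p, hp, p', hp', rfl⟩, _, ⟨_, ⟨q, hq, q', hq', rfl⟩, rfl⟩, rfl⟩
    exact ⟨p + m * q, ⟨p, hp, m * q, ⟨q, hq, rfl⟩, rfl⟩,
      p' + m * q', ⟨p', hp', m * q', ⟨q', hq', rfl⟩, rfl⟩, by ring⟩

lemma itSum_bounds (n : ℕ) (A : Finset ℤ) (hApos : ∀ a ∈ A, 0 ≤ a) (M : ℤ)
    (hM : ∀ a ∈ A, a ≤ M) : ∀ x ∈ itSum n A, 0 ≤ x ∧ x ≤ n * M := by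
  induction n with
  | zero => intro x hx; simp [itSum] at hx; simp [hx]
  | succ n ih =>
    intro x hx
    simp only [itSum, Finset.mem_add] at hx
    obtain ⟨a, ha, y, hy, rfl⟩ := hx
    obtain ⟨h1, h2⟩ := ih y hy
    constructor
    · exact add_nonneg (hApos a ha) h1
    · push_cast
      nlinarith [hM a ha]

theorem stmt_2 (k : ℕ) (hk : 1 ≤ k) (A B : Finset ℤ)
    (hA : A.Nonempty) (hB : B.Nonempty)
    (hApos : ∀ a ∈ A, 0 ≤ a) (hBpos : ∀ b ∈ B, 0 ≤ b)
    (m : ℤ) (hm : ∀ a ∈ A, (k : ℤ) * a < m)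
    (C : Finset ℤ) (hC : C = A + B.image (fun b => m * b)) :
    ∀ s d : ℕ, 1 ≤ s + d → s + d ≤ k →
      (gDiff s d C).card = (gDiff s d A).card * (gDiff s d B).card := by
  intro s d _ hsd
  set M := A.max' hA with hMdef
  have hMA : M ∈ A := A.max'_mem hA
  have hM0 : 0 ≤ M := hApos M hMA
  have hMle : ∀ a ∈ A, a ≤ M := fun a ha => A.le_max' a ha
  have hmM : (k : ℤ) * M < m := hm M hMA
  have hmpos : 0 < m := lt_of_le_of_lt (by positivity) hmM
  -- bound on gDiff s d A
  have hbound : ∀ x ∈ gDiff s d A, -(d * M) ≤ x ∧ x ≤ s * M := by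
    intro x hx
    obtain ⟨u, hu, v, hv, rfl⟩ := Finset.mem_sub.mp hx
    obtain ⟨hu0, huM⟩ := itSum_bounds s A hApos M hMle u hu
    obtain ⟨hv0, hvM⟩ := itSum_bounds d A hApos M hMle v hv
    constructor <;> linarith
  rw [gDiff_split m s d A B C hC]
  rw [← Finset.image_add_product]
  rw [Finset.card_image_of_injOn, Finset.card_product,
    Finset.card_image_of_injective _ (mul_right_injective₀ hmpos.ne')]
  rintro ⟨a₁, y₁⟩ h₁ ⟨a₂, y₂⟩ h₂ (heq : a₁ + y₁ = a₂ + y₂)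
  simp only [Finset.coe_product, Set.mem_prod, Finset.mem_coe, Finset.mem_product, Finset.mem_image] at h₁ h₂
  obtain ⟨ha₁, b₁, hb₁, rfl⟩ := h₁
  obtain ⟨ha₂, b₂, hb₂, rfl⟩ := h₂
  obtain ⟨hl₁, hr₁⟩ := hbound a₁ ha₁
  obtain ⟨hl₂, hr₂⟩ := hbound a₂ ha₂
  have hsd' : (s : ℤ) * M + d * M ≤ k * M := by
    have : (s : ℤ) + d ≤ k := by exact_mod_cast hsd
    nlinarith
  have hb : b₁ = b₂ := by
    by_contra hne
    have h1 : 1 ≤ |b₁ - b₂| := Int.one_le_abs (sub_ne_zero_of_ne hne)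
    have : |m * (b₁ - b₂)| = |a₂ - a₁| := by rw [show m * (b₁ - b₂) = a₂ - a₁ by linarith]
    have habs : |a₂ - a₁| < m := by
      rw [abs_lt]; constructor <;> linarith
    rw [abs_mul, abs_of_pos hmpos] at this
    nlinarith [abs_nonneg (b₁ - b₂)]
  subst hb
  have : a₁ = a₂ := by linarith
  rw [this]
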